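/- If every two elements of a tree T have a greatest lower bound, then every nonempty subset of T has a greatest lower bound. -/

import Mathlib

/-- A tree: a partial order in which the set of strict predecessors of every
element is well-ordered. -/
def IsTree (α : Type*) [PartialOrder α] : Prop :=
  ∀ t : α, IsWellOrder {s : α // s < t} (fun a b => (a : α) < b)

theorem stmt_1 {α : Type*} [PartialOrder α] (htree : IsTree α)
    (hglb2 : ∀ a b : α, ∃ g : α, IsGLB {a, b} g) :
    ∀ S : Set α, S.Nonempty → ∃ g : α, IsGLB S g := by
  rintro S ⟨t, ht⟩
  choose f hf using fun s : α => hglb2 t s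
  have hft : ∀ s, f s ≤ t := fun s => (hf s).1 (by simp)
  have hfs : ∀ s, f s ≤ s := fun s => (hf s).1 (by simp)
  have hfg : ∀ s x, x ≤ t → x ≤ s → x ≤ f s := by
    intro s x h1 h2
    refine (hf s).2 ?_
    rintro y (rfl | rfl) <;> assumption
  by_cases hall : ∀ s ∈ S, t ≤ s
  · exact ⟨t, fun s hs => hall s hs, fun b hb => hb ht⟩
  · push_neg at hall
    obtain ⟨s₁, hs₁, hts₁⟩ := hall
    have hf1 : f s₁ < t :=
      lt_of_le_of_ne (hft s₁) (fun h => hts₁ (h ▸ hfs s₁))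
    haveI : IsWellOrder {s : α // s < t} (fun a b => (a : α) < b) := htree t
    set r : {s : α // s < t} → {s : α // s < t} → Prop := fun a b => (a : α) < b with hr
    have hwf : WellFounded r := IsWellFounded.wf
    set A : Set {s : α // s < t} := {x | ∃ s ∈ S, (x : α) = f s} with hA
    have hAne : A.Nonempty := ⟨⟨f s₁, hf1⟩, s₁, hs₁, rfl⟩
    set m := hwf.min A hAne with hm
    obtain ⟨s₀, hs₀, hms₀⟩ := hwf.min_mem A hAne
    have hmin : ∀ x ∈ A, (m : α) ≤ x := by
      intro x hx
      have h1 : ¬ r x m := hwf.not_lt_min A hx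
      rcases trichotomous_of r m x with h | h | h
      · exact le_of_lt h
      · exact le_of_eq (congrArg Subtype.val h)
      · exact absurd h h1
    refine ⟨f s₀, ?_, ?_⟩
    · intro s hs
      have key : f s₀ ≤ f s := by
        rcases lt_or_eq_of_le (hft s) with h | h
        · exact le_trans (le_of_eq hms₀.symm) (hmin ⟨f s, h⟩ ⟨s, hs, rfl⟩)
        · exact le_trans (le_of_eq hms₀.symm) (le_of_le_of_eq (le_of_lt (hwf.min A hAne).2) h.symm)
      exact key.trans (hfs s)
    · intro b hb
      exact hfg s₀ b (hb ht) (hb hs₀)
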